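/- Let λ > 0, K > 0, and f : ℝ → ℝ be differentiable with |f'(s)| ≤ K e^{−λ(T − s)} for all s ∈ [0, T], where T = L h, t_l = l h, h > 0, L ∈ ℕ. Then |h ∑_{l=1}^{L} f(t_l) − ∫₀^{T} f(s) ds| ≤ K h² ∑_{l=1}^{L} e^{−λ(T − t_l)} ≤ C h, where C > 0 depends only on K and λ (not on T, L, or h ≤ 1). -/

import Mathlib

open Finset

lemma step8 (K lam : ℝ) (hK : 0 < K) (hlam : 0 < lam) (f : ℝ → ℝ) (hf : Differentiable ℝ f)
    (T a b : ℝ) (hab : a ≤ b) (h0a : 0 ≤ a) (hbT : b ≤ T)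
    (hd : ∀ s ∈ Set.Icc (0 : ℝ) T, |deriv f s| ≤ K * Real.exp (-lam * (T - s))) :
    |(b - a) * f b - ∫ s in a..b, f s| ≤ K * Real.exp (-lam * (T - b)) * (b - a) ^ 2 := by
  have hc : Continuous f := hf.continuous
  have hint : IntervalIntegrable f MeasureTheory.volume a b := hc.intervalIntegrable _ _
  set C0 : ℝ := K * Real.exp (-lam * (T - b)) with hC0
  have hsub : Set.Icc a b ⊆ Set.Icc (0 : ℝ) T := Set.Icc_subset_Icc h0a hbT
  have hbound : ∀ x ∈ Set.Icc a b, ‖deriv f x‖ ≤ C0 := by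
    intro x hx
    have h1 : |deriv f x| ≤ K * Real.exp (-lam * (T - x)) := hd x (hsub hx)
    have h2 : Real.exp (-lam * (T - x)) ≤ Real.exp (-lam * (T - b)) := by
      apply Real.exp_le_exp.2
      nlinarith [hx.2]
    calc ‖deriv f x‖ = |deriv f x| := rfl
      _ ≤ K * Real.exp (-lam * (T - x)) := h1
      _ ≤ C0 := by rw [hC0]; nlinarith [h2]
  have key : (b - a) * f b - ∫ s in a..b, f s = ∫ s in a..b, (f b - f s) := by
    rw [intervalIntegral.integral_sub (intervalIntegrable_const) hint,
      intervalIntegral.integral_const, smul_eq_mul]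
  rw [key]
  have hmain : ∀ x ∈ Set.uIoc a b, ‖f b - f x‖ ≤ C0 * (b - a) := by
    intro x hx
    rw [Set.uIoc_of_le hab] at hx
    have hxI : x ∈ Set.Icc a b := ⟨le_of_lt hx.1, hx.2⟩
    have hbI : b ∈ Set.Icc a b := ⟨hab, le_refl b⟩
    have := (convex_Icc a b).norm_image_sub_le_of_norm_deriv_le
      (fun y _ => hf y) hbound hxI hbI
    calc ‖f b - f x‖ ≤ C0 * ‖b - x‖ := this
      _ ≤ C0 * (b - a) := by
          have hC0nn : 0 ≤ C0 := by positivity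
          have : ‖b - x‖ ≤ b - a := by
            rw [Real.norm_eq_abs, abs_of_nonneg (by linarith [hx.2])]
            linarith [hx.1]
          nlinarith
  have := intervalIntegral.norm_integral_le_of_norm_le_const hmain
  calc |∫ s in a..b, (f b - f s)| ≤ C0 * (b - a) * |b - a| := this
    _ = K * Real.exp (-lam * (T - b)) * (b - a) ^ 2 := by
        rw [abs_of_nonneg (by linarith)]; ring

theorem stmt8 (K lam : ℝ) (hK : 0 < K) (hlam : 0 < lam) :
    ∃ C : ℝ, 0 < C ∧ ∀ (h : ℝ) (L : ℕ) (T : ℝ) (f : ℝ → ℝ),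
      0 < h → h ≤ 1 → T = L * h → Differentiable ℝ f →
      (∀ s ∈ Set.Icc (0 : ℝ) T, |deriv f s| ≤ K * Real.exp (-lam * (T - s))) →
      |h * ∑ l ∈ Finset.Icc 1 L, f (l * h) - ∫ s in (0:ℝ)..T, f s| ≤
          K * h ^ 2 * ∑ l ∈ Finset.Icc 1 L, Real.exp (-lam * (T - l * h)) ∧
      K * h ^ 2 * ∑ l ∈ Finset.Icc 1 L, Real.exp (-lam * (T - l * h)) ≤ C * h := by
  refine ⟨K * Real.exp lam / lam, by positivity, ?_⟩
  intro h L T f hh hh1 hT hf hd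
  have hc : Continuous f := hf.continuous
  -- reindexing of Icc 1 L sums to range L sums
  have reindex : ∀ g : ℕ → ℝ, ∑ l ∈ Finset.Icc 1 L, g l = ∑ i ∈ Finset.range L, g (i + 1) := by
    intro g
    rw [← Finset.Ico_add_one_right_eq_Icc, Finset.sum_Ico_eq_sum_range]
    simp [add_comm]
  constructor
  · -- first inequality
    have hsplit : (∫ s in (0:ℝ)..T, f s)
        = ∑ i ∈ Finset.range L, ∫ s in ((i : ℝ) * h)..(((i : ℝ) + 1) * h), f s := by
      have := intervalIntegral.sum_integral_adjacent_intervals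
        (a := fun i : ℕ => (i : ℝ) * h) (n := L)
        (μ := MeasureTheory.volume) (f := f)
        (fun k _ => hc.intervalIntegrable _ _)
      rw [hT]
      simp only [Nat.cast_zero, zero_mul] at this
      rw [← this]
      apply Finset.sum_congr rfl
      intro i _
      push_cast
      ring_nf
    have hsum : h * ∑ l ∈ Finset.Icc 1 L, f (l * h)
        = ∑ i ∈ Finset.range L, h * f (((i : ℝ) + 1) * h) := by
      rw [reindex fun l => f (l * h), Finset.mul_sum]
      apply Finset.sum_congr rfl
      intro i _
      push_cast
      ring_nf
    have hrhs : ∑ l ∈ Finset.Icc 1 L, Real.exp (-lam * (T - l * h))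
        = ∑ i ∈ Finset.range L, Real.exp (-lam * (T - ((i : ℝ) + 1) * h)) := by
      rw [reindex fun l => Real.exp (-lam * (T - l * h))]
      apply Finset.sum_congr rfl
      intro i _
      push_cast
      ring_nf
    rw [hsplit, hsum, hrhs, ← Finset.sum_sub_distrib, Finset.mul_sum]
    refine le_trans (Finset.abs_sum_le_sum_abs _ _) (Finset.sum_le_sum ?_)
    intro i hi
    have hiL : i + 1 ≤ L := Finset.mem_range.1 hi
    have hbT : ((i : ℝ) + 1) * h ≤ T := by
      rw [hT]
      have : ((i : ℝ) + 1) ≤ (L : ℝ) := by exact_mod_cast hiL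
      nlinarith
    have hab : (i : ℝ) * h ≤ ((i : ℝ) + 1) * h := by nlinarith
    have h0a : (0 : ℝ) ≤ (i : ℝ) * h := by positivity
    have := step8 K lam hK hlam f hf T ((i : ℝ) * h) (((i : ℝ) + 1) * h) hab h0a hbT hd
    have heq : ((i : ℝ) + 1) * h - (i : ℝ) * h = h := by ring
    rw [heq] at this
    calc |h * f (((i : ℝ) + 1) * h) - ∫ s in ((i : ℝ) * h)..(((i : ℝ) + 1) * h), f s|
        ≤ K * Real.exp (-lam * (T - ((i : ℝ) + 1) * h)) * h ^ 2 := this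
      _ = K * h ^ 2 * Real.exp (-lam * (T - ((i : ℝ) + 1) * h)) := by ring
  · -- second inequality
    set r : ℝ := Real.exp (-lam * h) with hr
    have hr0 : 0 < r := Real.exp_pos _
    have hr1 : r < 1 := by
      rw [hr]
      calc Real.exp (-lam * h) < Real.exp 0 := Real.exp_lt_exp.2 (by nlinarith)
        _ = 1 := Real.exp_zero
    have hterm : ∀ l ∈ Finset.Icc 1 L, Real.exp (-lam * (T - l * h)) = r ^ (L - l) := by
      intro l hl
      have hlL : l ≤ L := (Finset.mem_Icc.1 hl).2
      rw [hr, ← Real.exp_nat_mul]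
      congr 1
      rw [Nat.cast_sub hlL, hT]
      ring
    rw [Finset.sum_congr rfl hterm]
    have hgeom : ∑ l ∈ Finset.Icc 1 L, r ^ (L - l) = ∑ i ∈ Finset.range L, r ^ i := by
      rw [reindex fun l => r ^ (L - l)]
      rw [← Finset.sum_range_reflect]
      apply Finset.sum_congr rfl
      intro i hi
      have := Finset.mem_range.1 hi
      congr 1
      omega
    rw [hgeom]
    have hpos : 0 < 1 - r := by linarith
    have hgle : ∑ i ∈ Finset.range L, r ^ i ≤ 1 / (1 - r) := by
      rw [le_div_iff₀ hpos]
      have hm := geom_sum_mul r L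
      have : 0 ≤ r ^ L := le_of_lt (pow_pos hr0 L)
      nlinarith [hm]
    have hlow : lam * h * Real.exp (-lam) ≤ 1 - r := by
      have e1 : 1 + lam * h ≤ Real.exp (lam * h) := by
        have := Real.add_one_le_exp (lam * h); linarith
      have e2 : r * Real.exp (lam * h) = 1 := by
        rw [hr, ← Real.exp_add]
        norm_num
      have e3 : Real.exp (-lam) ≤ r := by
        rw [hr]; exact Real.exp_le_exp.2 (by nlinarith)
      nlinarith [mul_le_mul_of_nonneg_left e1 hr0.le,
        mul_le_mul_of_nonneg_left e3 (mul_nonneg hlam.le hh.le)]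
    have hpos : 0 < 1 - r := by linarith
    have hS : 0 ≤ ∑ i ∈ Finset.range L, r ^ i :=
      Finset.sum_nonneg fun i _ => le_of_lt (pow_pos hr0 i)
    have hfinal : h / (1 - r) ≤ Real.exp lam / lam := by
      rw [div_le_div_iff₀ hpos hlam]
      have e4 : Real.exp (-lam) * Real.exp lam = 1 := by
        rw [← Real.exp_add]; norm_num
      have e5 : lam * h * Real.exp (-lam) * Real.exp lam = lam * h := by
        rw [mul_assoc, e4, mul_one]
      nlinarith [mul_le_mul_of_nonneg_right hlow (Real.exp_pos lam).le, e5]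
    calc K * h ^ 2 * ∑ i ∈ Finset.range L, r ^ i
        ≤ K * h ^ 2 * (1 / (1 - r)) := by
          apply mul_le_mul_of_nonneg_left hgle (by positivity)
      _ = K * h * (h / (1 - r)) := by ring
      _ ≤ K * h * (Real.exp lam / lam) := by
          apply mul_le_mul_of_nonneg_left hfinal (by positivity)
      _ = K * Real.exp lam / lam * h := by ring
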